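/- Let k be a positive integer and let D=(V,A) be a digraph with a vertex r∈V such that the underlying undirected graph of D is k-partition-connected, r has in-degree 0, and every vertex v∈V−r has in-degree exactly k. Then A can be partitioned into k pairwise arc-disjoint spanning arborescences rooted at r; in particular, A can be partitioned into k weakly connected spanning subgraphs in each of which every vertex v∈V−r has positive in-degree. -/

import Mathlib

set_option linter.unusedSectionVars false
set_option linter.unusedVariables false


namespace ArborescenceStmt

/-- An arc of the digraph connects via set `F` (in the underlying undirected graph). -/
def Step {V A : Type*} (tail head : A → V) (F : Set A) (x y : V) : Prop :=
  ∃ a ∈ F, s(tail a, head a) = s(x, y)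

/-- The arc set `F` is a weakly connected spanning subgraph: its underlying undirected
graph connects all vertices. -/
def WeaklyConnects {V A : Type*} (tail head : A → V) (F : Set A) : Prop :=
  ∀ x y : V, Relation.ReflTransGen (Step tail head F) x y

/-- `B` is a spanning arborescence rooted at `r`: every vertex other than `r` has
exactly one arc of `B` entering it, no arc of `B` enters `r`, and every vertex is
reachable from `r` along arcs of `B`. -/
def IsArborescence {V A : Type*} (tail head : A → V) (r : V) (B : Set A) : Prop :=
  (∀ v : V, v ≠ r → ∃! a : A, a ∈ B ∧ head a = v) ∧
  (∀ a ∈ B, head a ≠ r) ∧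
  (∀ v : V, Relation.ReflTransGen (fun x y => ∃ a ∈ B, tail a = x ∧ head a = y) r v)

section Aux

variable {V A : Type*} [Fintype V] [DecidableEq V] [Fintype A] [DecidableEq A]
variable (tail head : A → V) (r : V)

def rho (F : Finset A) (X : Finset V) : ℕ :=
  (F.filter fun a => head a ∈ X ∧ tail a ∉ X).card

lemma rho_submodular (F : Finset A) (X Y : Finset V) :
    rho tail head F (X ∪ Y) + rho tail head F (X ∩ Y)
      ≤ rho tail head F X + rho tail head F Y := by
  classical
  simp only [rho, Finset.card_filter]
  rw [← Finset.sum_add_distrib, ← Finset.sum_add_distrib]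
  refine Finset.sum_le_sum fun a _ => ?_
  by_cases h1 : head a ∈ X <;> by_cases h2 : head a ∈ Y <;>
    by_cases h3 : tail a ∈ X <;> by_cases h4 : tail a ∈ Y <;>
    simp [Finset.mem_union, Finset.mem_inter, h1, h2, h3, h4]

lemma rho_mono {F F' : Finset A} (h : F' ⊆ F) (X : Finset V) :
    rho tail head F' X ≤ rho tail head F X :=
  Finset.card_le_card (Finset.filter_subset_filter _ h)

lemma rho_sdiff_of_heads {F B : Finset A} {S : Finset V}
    (hB : ∀ a ∈ B, head a ∈ S) (X : Finset V) (hX : ∀ x ∈ X, x ∉ S) :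
    rho tail head (F \ B) X = rho tail head F X := by
  unfold rho
  congr 1
  ext a
  simp only [Finset.mem_filter, Finset.mem_sdiff]
  constructor
  · tauto
  · rintro ⟨ha, h1, h2⟩
    exact ⟨⟨ha, fun hb => hX _ h1 (hB a hb)⟩, h1, h2⟩

/-- State of the greedy arborescence-growing procedure. -/
structure St (k : ℕ) (F B : Finset A) (S : Finset V) : Prop where
  hBF : B ⊆ F
  hrS : r ∈ S
  hhead : ∀ a ∈ B, head a ∈ S
  hnr : ∀ a ∈ B, head a ≠ r
  huniq : ∀ v ∈ S, v ≠ r → ∃! a : A, a ∈ B ∧ head a = v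
  hreach : ∀ v ∈ S,
    Relation.ReflTransGen (fun x y => ∃ a ∈ B, tail a = x ∧ head a = y) r v
  hinv : ∀ X : Finset V, X.Nonempty → r ∉ X → k ≤ rho tail head (F \ B) X

lemma extend {k : ℕ} {F B : Finset A} {S : Finset V}
    (hFcut : ∀ X : Finset V, X.Nonempty → r ∉ X → k + 1 ≤ rho tail head F X)
    (st : St tail head r k F B S) (hS : S ≠ Finset.univ) :
    ∃ a, a ∈ F ∧ a ∉ B ∧ tail a ∈ S ∧ head a ∉ S ∧
      St tail head r k F (insert a B) (insert (head a) S) := by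
  classical
  -- find a good arc
  have hgood : ∃ a, a ∈ F ∧ a ∉ B ∧ tail a ∈ S ∧ head a ∉ S ∧
      ∀ Z : Finset V, Z.Nonempty → r ∉ Z → head a ∈ Z → tail a ∉ Z →
        k + 1 ≤ rho tail head (F \ B) Z := by
    by_cases hC : ∃ Z : Finset V, (Z.Nonempty ∧ r ∉ Z ∧ rho tail head (F \ B) Z ≤ k)
        ∧ ∃ z ∈ Z, z ∉ S
    · -- there is a critical set meeting the complement of S; take a minimal one
      set CS : Finset (Finset V) := Finset.univ.filter
        (fun Z => (Z.Nonempty ∧ r ∉ Z ∧ rho tail head (F \ B) Z ≤ k) ∧ ∃ z ∈ Z, z ∉ S)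
        with hCS
      have hCSne : CS.Nonempty := by
        obtain ⟨Z, h1, h2⟩ := hC
        exact ⟨Z, by simp [hCS, h1, h2]⟩
      obtain ⟨X, hXmem, hXmin⟩ := CS.exists_minimal hCSne
      rw [hCS, Finset.mem_filter] at hXmem
      obtain ⟨-, ⟨hXne, hXr, hXrho⟩, hXT⟩ := hXmem
      -- W = part of X outside S
      set W : Finset V := X.filter (fun x => x ∉ S) with hW
      have hWX : W ⊆ X := Finset.filter_subset _ _
      have hWne : W.Nonempty := by
        obtain ⟨z, hz1, hz2⟩ := hXT
        exact ⟨z, by simp [hW, hz1, hz2]⟩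
      have hWout : ∀ x ∈ W, x ∉ S := fun x hx => (Finset.mem_filter.1 hx).2
      have hWr : r ∉ W := fun h => hXr (hWX h)
      have hWrho : k + 1 ≤ rho tail head (F \ B) W := by
        rw [rho_sdiff_of_heads tail head st.hhead W hWout]
        exact hFcut W hWne hWr
      -- there is an arc entering W whose tail lies in X
      have hE : ∃ a, (a ∈ F ∧ a ∉ B) ∧ head a ∈ W ∧ tail a ∈ X ∧ tail a ∉ W := by
        by_contra hE
        push_neg at hE
        have hsub : (F \ B).filter (fun a => head a ∈ W ∧ tail a ∉ W) ⊆
            (F \ B).filter (fun a => head a ∈ X ∧ tail a ∉ X) := by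
          intro a ha
          rw [Finset.mem_filter] at ha ⊢
          obtain ⟨haF, h1, h2⟩ := ha
          rw [Finset.mem_sdiff] at haF
          exact ⟨Finset.mem_sdiff.2 haF, hWX h1, fun h3 => h2 (hE a ⟨haF.1, haF.2⟩ h1 h3)⟩
        have := Finset.card_le_card hsub
        rw [show ((F \ B).filter fun a => head a ∈ W ∧ tail a ∉ W).card
              = rho tail head (F \ B) W from rfl,
            show ((F \ B).filter fun a => head a ∈ X ∧ tail a ∉ X).card
              = rho tail head (F \ B) X from rfl] at this
        omega
      obtain ⟨a, ⟨haF, haB⟩, ha1, ha2, ha3⟩ := hE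
      have htailS : tail a ∈ S := by
        by_contra h
        exact ha3 (Finset.mem_filter.2 ⟨ha2, h⟩)
      have hheadS : head a ∉ S := hWout _ ha1
      refine ⟨a, haF, haB, htailS, hheadS, ?_⟩
      intro Z hZne hZr hhZ htZ
      by_contra hcon
      push_neg at hcon
      have hZrho : rho tail head (F \ B) Z ≤ k := by omega
      -- X ∩ Z is a smaller critical set meeting the complement of S
      have hXZne : (X ∩ Z).Nonempty := ⟨head a, Finset.mem_inter.2 ⟨hWX ha1, hhZ⟩⟩
      have hXZr : r ∉ X ∩ Z := fun h => hXr (Finset.mem_inter.1 h).1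
      have hXZU : r ∉ X ∪ Z := by
        rw [Finset.mem_union]; tauto
      have hsub := rho_submodular tail head (F \ B) X Z
      have hUB := st.hinv (X ∪ Z) ⟨head a, Finset.mem_union.2 (Or.inr hhZ)⟩ hXZU
      have hXZrho : rho tail head (F \ B) (X ∩ Z) ≤ k := by omega
      have hmem : X ∩ Z ∈ CS := by
        rw [hCS, Finset.mem_filter]
        exact ⟨Finset.mem_univ _, ⟨hXZne, hXZr, hXZrho⟩,
          ⟨head a, Finset.mem_inter.2 ⟨hWX ha1, hhZ⟩, hheadS⟩⟩
      have hlt : X ∩ Z < X := by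
        refine lt_of_le_of_ne Finset.inter_subset_left ?_
        intro h
        have : tail a ∈ X ∩ Z := by rw [h]; exact ha2
        exact htZ (Finset.mem_inter.1 this).2
      exact hlt.2 (hXmin hmem hlt.1)
    · -- no critical set meets the complement of S
      push_neg at hC
      set T : Finset V := Finset.univ \ S with hT
      have hTne : T.Nonempty := by
        rw [Finset.sdiff_nonempty]
        intro h
        exact hS (Finset.univ_subset_iff.1 h)
      have hTr : r ∉ T := by simp [hT, st.hrS]
      have hTout : ∀ x ∈ T, x ∉ S := fun x hx => (Finset.mem_sdiff.1 hx).2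
      have hTrho : k + 1 ≤ rho tail head (F \ B) T := by
        rw [rho_sdiff_of_heads tail head st.hhead T hTout]
        exact hFcut T hTne hTr
      have : ((F \ B).filter fun a => head a ∈ T ∧ tail a ∉ T).Nonempty := by
        rw [← Finset.card_pos]
        have : rho tail head (F \ B) T ≤
            ((F \ B).filter fun a => head a ∈ T ∧ tail a ∉ T).card := le_of_eq rfl
        omega
      obtain ⟨a, ha⟩ := this
      rw [Finset.mem_filter, Finset.mem_sdiff] at ha
      obtain ⟨⟨haF, haB⟩, hh, ht⟩ := ha
      have hheadS : head a ∉ S := hTout _ hh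
      have htailS : tail a ∈ S := by
        by_contra h
        exact ht (Finset.mem_sdiff.2 ⟨Finset.mem_univ _, h⟩)
      refine ⟨a, haF, haB, htailS, hheadS, ?_⟩
      intro Z hZne hZr hhZ htZ
      by_contra hcon
      push_neg at hcon
      exact hheadS (hC Z ⟨hZne, hZr, by omega⟩ (head a) hhZ)
  obtain ⟨a, haF, haB, htS, hhS, hkey⟩ := hgood
  have hhr : head a ≠ r := fun h => hhS (h ▸ st.hrS)
  refine ⟨a, haF, haB, htS, hhS, ?_⟩
  refine ⟨?_, ?_, ?_, ?_, ?_, ?_, ?_⟩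
  · exact Finset.insert_subset haF st.hBF
  · exact Finset.mem_insert_of_mem st.hrS
  · intro b hb
    rcases Finset.mem_insert.1 hb with h | h
    · exact h ▸ Finset.mem_insert_self _ _
    · exact Finset.mem_insert_of_mem (st.hhead b h)
  · intro b hb
    rcases Finset.mem_insert.1 hb with h | h
    · exact h ▸ hhr
    · exact st.hnr b h
  · intro v hv hvr
    rcases Finset.mem_insert.1 hv with h | h
    · -- v = head a
      subst h
      refine ⟨a, ⟨Finset.mem_insert_self _ _, rfl⟩, ?_⟩
      rintro b ⟨hb, hbh⟩
      rcases Finset.mem_insert.1 hb with h | h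
      · exact h
      · exact absurd (hbh ▸ st.hhead b h) hhS
    · -- v ∈ S
      obtain ⟨b, ⟨hb1, hb2⟩, hbu⟩ := st.huniq v h hvr
      refine ⟨b, ⟨Finset.mem_insert_of_mem hb1, hb2⟩, ?_⟩
      rintro c ⟨hc, hch⟩
      rcases Finset.mem_insert.1 hc with h' | h'
      · subst h'
        exact absurd (hch ▸ h) hhS
      · exact hbu c ⟨h', hch⟩
  · intro v hv
    have hmono : ∀ x y, (∃ b ∈ B, tail b = x ∧ head b = y) →
        (∃ b ∈ insert a B, tail b = x ∧ head b = y) := by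
      rintro x y ⟨b, hb, h1, h2⟩
      exact ⟨b, Finset.mem_insert_of_mem hb, h1, h2⟩
    rcases Finset.mem_insert.1 hv with h | h
    · subst h
      exact (Relation.ReflTransGen.mono hmono _ _ (st.hreach (tail a) htS)).tail
        ⟨a, Finset.mem_insert_self _ _, rfl, rfl⟩
    · exact Relation.ReflTransGen.mono hmono _ _ (st.hreach v h)
  · intro Z hZne hZr
    have hFi : F \ insert a B = (F \ B).erase a := Finset.sdiff_insert F B a
    rw [hFi]
    by_cases hent : head a ∈ Z ∧ tail a ∉ Z
    · have h1 : k + 1 ≤ rho tail head (F \ B) Z := hkey Z hZne hZr hent.1 hent.2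
      have hmem : a ∈ (F \ B).filter fun b => head b ∈ Z ∧ tail b ∉ Z :=
        Finset.mem_filter.2 ⟨Finset.mem_sdiff.2 ⟨haF, haB⟩, hent⟩
      unfold rho
      rw [Finset.filter_erase, Finset.card_erase_of_mem hmem]
      unfold rho at h1
      omega
    · have : rho tail head ((F \ B).erase a) Z = rho tail head (F \ B) Z := by
        unfold rho
        rw [Finset.filter_erase, Finset.erase_eq_of_notMem]
        intro hmem
        exact hent (Finset.mem_filter.1 hmem).2
      rw [this]
      exact st.hinv Z hZne hZr

/-- Greedy growth: any state extends to a spanning one. -/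
lemma build {k : ℕ} {F : Finset A}
    (hFcut : ∀ X : Finset V, X.Nonempty → r ∉ X → k + 1 ≤ rho tail head F X) :
    ∀ (n : ℕ) (B : Finset A) (S : Finset V), St tail head r k F B S →
      (Finset.univ \ S).card ≤ n → ∃ B', St tail head r k F B' Finset.univ := by
  intro n
  induction n with
  | zero =>
    intro B S st h
    have hS : S = Finset.univ := by
      have h0 : Finset.univ \ S = ∅ := Finset.card_eq_zero.1 (Nat.le_zero.1 h)
      exact Finset.univ_subset_iff.1 (Finset.sdiff_eq_empty_iff_subset.1 h0)
    exact ⟨B, hS ▸ st⟩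
  | succ n ih =>
    intro B S st h
    by_cases hS : S = Finset.univ
    · exact ⟨B, hS ▸ st⟩
    · obtain ⟨a, haF, haB, htS, hhS, st'⟩ := extend tail head r hFcut st hS
      refine ih (insert a B) (insert (head a) S) st' ?_
      have : Finset.univ \ insert (head a) S = (Finset.univ \ S).erase (head a) :=
        Finset.sdiff_insert _ _ _
      rw [this, Finset.card_erase_of_mem
        (Finset.mem_sdiff.2 ⟨Finset.mem_univ _, hhS⟩)]
      have : 0 < (Finset.univ \ S).card := Finset.card_pos.2
        ⟨head a, Finset.mem_sdiff.2 ⟨Finset.mem_univ _, hhS⟩⟩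
      omega

/-- Extraction of one spanning arborescence keeping the cut condition. -/
lemma exists_arb {k : ℕ} {F : Finset A}
    (hFcut : ∀ X : Finset V, X.Nonempty → r ∉ X → k + 1 ≤ rho tail head F X) :
    ∃ B : Finset A, B ⊆ F ∧
      (∀ v : V, v ≠ r → ∃! a : A, a ∈ B ∧ head a = v) ∧
      (∀ a ∈ B, head a ≠ r) ∧
      (∀ v : V, Relation.ReflTransGen
        (fun x y => ∃ b ∈ B, tail b = x ∧ head b = y) r v) ∧
      (∀ X : Finset V, X.Nonempty → r ∉ X → k ≤ rho tail head (F \ B) X) := by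
  have st0 : St tail head r k F ∅ {r} := by
    refine ⟨Finset.empty_subset _, Finset.mem_singleton_self r, ?_, ?_, ?_, ?_, ?_⟩
    · intro a ha; exact absurd ha (Finset.notMem_empty a)
    · intro a ha; exact absurd ha (Finset.notMem_empty a)
    · intro v hv hvr; exact absurd (Finset.mem_singleton.1 hv) hvr
    · intro v hv
      rw [Finset.mem_singleton.1 hv]
    · intro X hX hrX
      rw [Finset.sdiff_empty]
      have := hFcut X hX hrX
      omega
  obtain ⟨B, st⟩ := build tail head r hFcut (Finset.univ \ {r}).card ∅ {r} st0 le_rfl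
  exact ⟨B, st.hBF,
    fun v hv => st.huniq v (Finset.mem_univ v) hv,
    st.hnr,
    fun v => st.hreach v (Finset.mem_univ v),
    st.hinv⟩

/-- Main induction: peel off arborescences one by one. -/
lemma main_induction : ∀ (k : ℕ) (F : Finset A),
    (∀ a ∈ F, head a ≠ r) →
    (∀ v : V, v ≠ r → (F.filter fun a => head a = v).card = k) →
    (∀ X : Finset V, X.Nonempty → r ∉ X → k ≤ rho tail head F X) →
    ∃ f : Fin k → Set A, (⋃ i, f i) = ↑F ∧
      (Pairwise fun i j => Disjoint (f i) (f j)) ∧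
      ∀ i, IsArborescence tail head r (f i) := by
  intro k
  induction k with
  | zero =>
    intro F hnr hdeg _
    have hF : F = ∅ := by
      rw [Finset.eq_empty_iff_forall_notMem]
      intro a ha
      have h1 := hdeg (head a) (hnr a ha)
      have h2 : a ∈ F.filter fun b => head b = head a := Finset.mem_filter.2 ⟨ha, rfl⟩
      have := Finset.card_pos.2 ⟨a, h2⟩
      omega
    refine ⟨fun i => i.elim0, ?_, ?_, fun i => i.elim0⟩
    · subst hF; simp
    · intro i; exact i.elim0
  | succ k ih =>
    intro F hnr hdeg hcut
    obtain ⟨B, hBF, huniq, hBnr, hreach, hinv⟩ := exists_arb tail head r hcut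
    -- in-degrees in F \ B
    have hdeg' : ∀ v : V, v ≠ r → ((F \ B).filter fun a => head a = v).card = k := by
      intro v hv
      obtain ⟨b, ⟨hb1, hb2⟩, hbu⟩ := huniq v hv
      have hBfil : B.filter (fun a => head a = v) = {b} := by
        ext c
        simp only [Finset.mem_filter, Finset.mem_singleton]
        constructor
        · rintro ⟨h1, h2⟩; exact hbu c ⟨h1, h2⟩
        · rintro rfl; exact ⟨hb1, hb2⟩
      have hsplit : (F \ B).filter (fun a => head a = v)
          = F.filter (fun a => head a = v) \ B.filter (fun a => head a = v) := by
        ext c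
        simp only [Finset.mem_filter, Finset.mem_sdiff]
        tauto
      rw [hsplit, hBfil]
      have hbmem : b ∈ F.filter fun a => head a = v :=
        Finset.mem_filter.2 ⟨hBF hb1, hb2⟩
      rw [Finset.sdiff_singleton_eq_erase, Finset.card_erase_of_mem hbmem,
        hdeg v hv]
      omega
    have hnr' : ∀ a ∈ F \ B, head a ≠ r := fun a ha =>
      hnr a (Finset.mem_sdiff.1 ha).1
    obtain ⟨f', hf'U, hf'P, hf'A⟩ := ih (F \ B) hnr' hdeg' hinv
    refine ⟨Fin.cases (↑B) f', ?_, ?_, ?_⟩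
    · ext x
      simp only [Set.mem_iUnion]
      constructor
      · rintro ⟨i, hi⟩
        induction i using Fin.cases with
        | zero =>
          simp only [Fin.cases_zero] at hi
          exact Finset.mem_coe.2 (hBF (Finset.mem_coe.1 hi))
        | succ j =>
          simp only [Fin.cases_succ] at hi
          have : x ∈ (↑(F \ B) : Set A) := hf'U ▸ Set.mem_iUnion.2 ⟨j, hi⟩
          exact Finset.mem_coe.2 (Finset.mem_sdiff.1 (Finset.mem_coe.1 this)).1
      · intro hx
        by_cases hB : x ∈ B
        · exact ⟨0, by simpa using hB⟩
        · have : x ∈ (⋃ i, f' i) := by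
            rw [hf'U]
            exact Finset.mem_coe.2 (Finset.mem_sdiff.2 ⟨Finset.mem_coe.1 hx, hB⟩)
          obtain ⟨j, hj⟩ := Set.mem_iUnion.1 this
          exact ⟨j.succ, by simpa using hj⟩
    · have hdisjB : ∀ j, Disjoint (↑B : Set A) (f' j) := by
        intro j
        rw [Set.disjoint_left]
        intro x hxB hxj
        have : x ∈ (↑(F \ B) : Set A) := hf'U ▸ Set.mem_iUnion.2 ⟨j, hxj⟩
        exact (Finset.mem_sdiff.1 (Finset.mem_coe.1 this)).2 (Finset.mem_coe.1 hxB)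
      intro i j hij
      induction i using Fin.cases with
      | zero =>
        induction j using Fin.cases with
        | zero => exact absurd rfl hij
        | succ j' => simpa using hdisjB j'
      | succ i' =>
        induction j using Fin.cases with
        | zero => simpa using (hdisjB i').symm
        | succ j' =>
          simp only [Fin.cases_succ]
          exact hf'P (fun h => hij (congrArg Fin.succ h))
    · intro i
      induction i using Fin.cases with
      | zero =>
        simp only [Fin.cases_zero]
        refine ⟨?_, ?_, ?_⟩
        · intro v hv
          obtain ⟨b, ⟨h1, h2⟩, hu⟩ := huniq v hv
          exact ⟨b, ⟨Finset.mem_coe.2 h1, h2⟩, fun c ⟨hc1, hc2⟩ => hu c ⟨Finset.mem_coe.1 hc1, hc2⟩⟩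
        · intro a ha; exact hBnr a (Finset.mem_coe.1 ha)
        · intro v
          refine Relation.ReflTransGen.mono ?_ _ _ (hreach v)
          rintro x y ⟨b, hb, h1, h2⟩
          exact ⟨b, Finset.mem_coe.2 hb, h1, h2⟩
      | succ j => simpa using hf'A j

/-- Derive the directed cut condition from partition-connectivity and the degree
hypotheses. -/
lemma cut_condition {k : ℕ}
    (hpc : ∀ P : Finpartition (Finset.univ : Finset V),
      k * (P.parts.card - 1) ≤ {a : A | P.part (tail a) ≠ P.part (head a)}.ncard)
    (hr : {a : A | head a = r} = ∅)
    (hv : ∀ v : V, v ≠ r → {a : A | head a = v}.ncard = k) :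
    ∀ X : Finset V, X.Nonempty → r ∉ X → k ≤ rho tail head Finset.univ X := by
  classical
  have hdeg : ∀ v : V, v ≠ r → (Finset.univ.filter fun a => head a = v).card = k := by
    intro v hv'
    have he : {a : A | head a = v} = ↑(Finset.univ.filter fun a => head a = v) := by
      ext a; simp
    have := hv v hv'
    rwa [he, Set.ncard_coe_finset] at this
  have hdegr : (Finset.univ.filter fun a => head a = r).card = 0 := by
    rw [Finset.card_eq_zero, Finset.eq_empty_iff_forall_notMem]
    intro a ha
    have : a ∈ {b : A | head b = r} := (Finset.mem_filter.1 ha).2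
    rw [hr] at this
    exact this
  -- total number of arcs
  have htotal : (Finset.univ : Finset A).card = (Fintype.card V - 1) * k := by
    rw [Finset.card_eq_sum_card_fiberwise (f := head) (t := Finset.univ)
      (fun a _ => Finset.mem_univ (head a))]
    rw [← Finset.sum_erase_add _ _ (Finset.mem_univ r), hdegr, add_zero]
    rw [Finset.sum_congr rfl (fun v hv' => hdeg v (Finset.ne_of_mem_erase hv'))]
    rw [Finset.sum_const, Finset.card_erase_of_mem (Finset.mem_univ r),
      Finset.card_univ, smul_eq_mul]
  intro X hXne hXr
  -- number of arcs with head in X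
  have hheadIn : (Finset.univ.filter fun a => head a ∈ X).card = X.card * k := by
    rw [Finset.card_eq_sum_card_fiberwise (f := head) (s := Finset.univ.filter fun a => head a ∈ X) (t := X)
      (fun a ha => (Finset.mem_filter.1 ha).2)]
    have hfib : ∀ v ∈ X, ((Finset.univ.filter fun a => head a ∈ X).filter
        fun a => head a = v).card = k := by
      intro v hvX
      have : (Finset.univ.filter fun a => head a ∈ X).filter (fun a => head a = v)
          = Finset.univ.filter fun a => head a = v := by
        ext a
        simp only [Finset.mem_filter, Finset.mem_univ, true_and]
        constructor
        · tauto
        · intro h; exact ⟨h ▸ hvX, h⟩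
      rw [this]
      exact hdeg v (fun h => hXr (h ▸ hvX))
    rw [Finset.sum_congr rfl hfib, Finset.sum_const, smul_eq_mul]
  -- split the arcs with head in X
  have hsplit : (Finset.univ.filter fun a => head a ∈ X ∧ tail a ∈ X).card
      + rho tail head Finset.univ X = X.card * k := by
    rw [← hheadIn]
    have := Finset.card_filter_add_card_filter_not
      (s := Finset.univ.filter fun a => head a ∈ X) (p := fun a => tail a ∈ X)
    rw [Finset.filter_filter, Finset.filter_filter] at this
    unfold rho
    rw [show (Finset.univ.filter fun a => head a ∈ X ∧ tail a ∉ X)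
        = Finset.univ.filter (fun a => head a ∈ X ∧ ¬ tail a ∈ X) from rfl]
    exact this
  -- the partition into X and singletons
  have hXnotmem : X ∉ (Finset.univ \ X).image (fun v => ({v} : Finset V)) := by
    intro h
    obtain ⟨v, hv1, hv2⟩ := Finset.mem_image.1 h
    have hvX : v ∉ X := (Finset.mem_sdiff.1 hv1).2
    exact hvX (hv2 ▸ Finset.mem_singleton_self v)
  have hP : ∃ P : Finpartition (Finset.univ : Finset V),
      P.parts = insert X ((Finset.univ \ X).image fun v => ({v} : Finset V)) := by
    refine ⟨⟨insert X ((Finset.univ \ X).image fun v => ({v} : Finset V)), ?_, ?_, ?_⟩, rfl⟩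
    · rw [Finset.supIndep_iff_pairwiseDisjoint]
      intro s hs t ht hst
      simp only [Finset.coe_insert, Set.mem_insert_iff, Finset.coe_image,
        Set.mem_image, Finset.mem_coe] at hs ht
      rcases hs with rfl | ⟨v, hv, rfl⟩ <;> rcases ht with rfl | ⟨w, hw, rfl⟩
      · exact absurd rfl hst
      · exact Finset.disjoint_singleton_right.2 (Finset.mem_sdiff.1 hw).2
      · exact Finset.disjoint_singleton_left.2 (Finset.mem_sdiff.1 hv).2
      · refine Finset.disjoint_singleton_right.2 ?_
        intro hmem
        exact hst ((Finset.mem_singleton.1 hmem) ▸ rfl)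
    · apply le_antisymm
      · exact Finset.sup_le fun s _ => Finset.subset_univ s
      · intro v _
        rw [Finset.mem_sup]
        by_cases hvX : v ∈ X
        · exact ⟨X, Finset.mem_insert_self _ _, hvX⟩
        · refine ⟨{v}, ?_, Finset.mem_singleton_self v⟩
          exact Finset.mem_insert_of_mem (Finset.mem_image.2
            ⟨v, Finset.mem_sdiff.2 ⟨Finset.mem_univ v, hvX⟩, rfl⟩)
    · intro h
      rcases Finset.mem_insert.1 h with h | h
      · obtain ⟨x, hx⟩ := hXne
        rw [← h] at hx
        exact Finset.notMem_empty x hx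
      · obtain ⟨v, _, hv2⟩ := Finset.mem_image.1 h
        exact Finset.singleton_ne_empty v hv2
  obtain ⟨P, hPparts⟩ := hP
  have hXmemP : X ∈ P.parts := hPparts ▸ Finset.mem_insert_self _ _
  have hpartX : ∀ y, y ∈ X → P.part y = X := fun y hy => P.part_eq_of_mem hXmemP hy
  have hpartS : ∀ y, y ∉ X → P.part y = {y} := by
    intro y hy
    refine P.part_eq_of_mem ?_ (Finset.mem_singleton_self y)
    rw [hPparts]
    exact Finset.mem_insert_of_mem (Finset.mem_image.2
      ⟨y, Finset.mem_sdiff.2 ⟨Finset.mem_univ y, hy⟩, rfl⟩)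
  have hcard : P.parts.card = (Fintype.card V - X.card) + 1 := by
    rw [hPparts, Finset.card_insert_of_notMem hXnotmem,
      Finset.card_image_of_injective _ Finset.singleton_injective,
      Finset.card_univ_diff]
  -- identify the crossing arcs
  have hcross : {a : A | P.part (tail a) ≠ P.part (head a)}
      = ↑(Finset.univ.filter fun a =>
          ¬((tail a ∈ X ∧ head a ∈ X) ∨ tail a = head a)) := by
    ext a
    simp only [Set.mem_setOf_eq, Finset.coe_filter, Finset.mem_univ, true_and,
      Set.mem_setOf_eq]
    by_cases h1 : tail a ∈ X <;> by_cases h2 : head a ∈ X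
    · rw [hpartX _ h1, hpartX _ h2]
      exact iff_of_false (fun h => h rfl) (fun h => h (Or.inl ⟨h1, h2⟩))
    · rw [hpartX _ h1, hpartS _ h2]
      have hne : X ≠ ({head a} : Finset V) := by
        intro h
        exact h2 (h ▸ Finset.mem_singleton_self (head a))
      have hth : tail a ≠ head a := fun h => h2 (h ▸ h1)
      exact iff_of_true hne (by rintro (⟨-, hh⟩ | he); exacts [h2 hh, hth he])
    · rw [hpartS _ h1, hpartX _ h2]
      have hne : ({tail a} : Finset V) ≠ X := by
        intro h
        exact h1 (h ▸ Finset.mem_singleton_self (tail a))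
      have hth : tail a ≠ head a := fun h => h1 (h.symm ▸ h2)
      exact iff_of_true hne (by rintro (⟨ht', -⟩ | he); exacts [h1 ht', hth he])
    · rw [hpartS _ h1, hpartS _ h2]
      constructor
      · rintro hne (⟨ht', -⟩ | he)
        · exact h1 ht'
        · exact hne (by rw [he])
      · intro hR h
        exact hR (Or.inr (Finset.singleton_injective h))
  have hpcX := hpc P
  rw [hcross, Set.ncard_coe_finset, hcard] at hpcX
  -- inside and crossing arcs are disjoint
  have hdisj : Disjoint (Finset.univ.filter fun a => head a ∈ X ∧ tail a ∈ X)
      (Finset.univ.filter fun a => ¬((tail a ∈ X ∧ head a ∈ X) ∨ tail a = head a)) := by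
    rw [Finset.disjoint_left]
    intro a ha hb
    have h1 := (Finset.mem_filter.1 ha).2
    have h2 := (Finset.mem_filter.1 hb).2
    exact h2 (Or.inl ⟨h1.2, h1.1⟩)
  have hsum : (Finset.univ.filter fun a => head a ∈ X ∧ tail a ∈ X).card
      + (Finset.univ.filter fun a =>
          ¬((tail a ∈ X ∧ head a ∈ X) ∨ tail a = head a)).card
      ≤ (Finset.univ : Finset A).card := by
    rw [← Finset.card_union_of_disjoint hdisj]
    exact Finset.card_le_univ _
  -- arithmetic
  rw [htotal] at hsum
  have hpc2 : k * (Fintype.card V - X.card) ≤ (Finset.univ.filter fun a =>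
      ¬((tail a ∈ X ∧ head a ∈ X) ∨ tail a = head a)).card := by
    have hh : (Fintype.card V - X.card + 1) - 1 = Fintype.card V - X.card := by omega
    rwa [hh] at hpcX
  have hx1 : 1 ≤ X.card := Finset.card_pos.2 hXne
  have hxn : X.card ≤ Fintype.card V := Finset.card_le_univ X
  have hkey : (Fintype.card V - 1) * k
      = k * (Fintype.card V - X.card) + k * (X.card - 1) := by
    rw [mul_comm, ← mul_add]
    congr 1
    omega
  have hxk : X.card * k = k * (X.card - 1) + k := by
    obtain ⟨y, hy⟩ : ∃ y, X.card = y + 1 := ⟨X.card - 1, by omega⟩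
    rw [hy, Nat.add_sub_cancel, add_mul, one_mul, mul_comm]
  rw [hkey] at hsum
  rw [hxk] at hsplit
  generalize k * (Fintype.card V - X.card) = q at hsum hpc2
  generalize k * (X.card - 1) = p at hsum hsplit
  omega

end Aux

/-- Let `k > 0` and let `D = (V, A)` be a finite digraph (arcs given by
`tail` and `head`) with a vertex `r` such that the underlying undirected graph of `D` is
`k`-partition-connected (for every partition `P` of `V` into nonempty classes at least
`k(|P| - 1)` arcs join different classes of `P`), `r` has in-degree `0`, and every other
vertex has in-degree exactly `k`.  Then `A` can be partitioned into `k` pairwise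
arc-disjoint spanning arborescences rooted at `r`; in particular, `A` can be partitioned
into `k` weakly connected spanning subgraphs in each of which every vertex `v ∈ V - r`
has positive in-degree. -/
theorem partition_into_arborescences {V A : Type*} [Fintype V] [DecidableEq V] [Fintype A]
    (k : ℕ) (hk : 0 < k) (tail head : A → V) (r : V)
    (hpc : ∀ P : Finpartition (Finset.univ : Finset V),
      k * (P.parts.card - 1) ≤ {a : A | P.part (tail a) ≠ P.part (head a)}.ncard)
    (hr : {a : A | head a = r} = ∅)
    (hv : ∀ v : V, v ≠ r → {a : A | head a = v}.ncard = k) :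
    (∃ f : Fin k → Set A, (⋃ i, f i) = Set.univ ∧
      (Pairwise fun i j => Disjoint (f i) (f j)) ∧
      ∀ i, IsArborescence tail head r (f i)) ∧
    (∃ g : Fin k → Set A, (⋃ i, g i) = Set.univ ∧
      (Pairwise fun i j => Disjoint (g i) (g j)) ∧
      ∀ i, WeaklyConnects tail head (g i) ∧
        ∀ v : V, v ≠ r → ∃ a ∈ g i, head a = v) := by
  classical
  have hcut := cut_condition tail head r hpc hr hv
  have hdeg : ∀ v : V, v ≠ r →
      ((Finset.univ : Finset A).filter fun a => head a = v).card = k := by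
    intro v hv'
    have he : {a : A | head a = v} = ↑(Finset.univ.filter fun a => head a = v) := by
      ext a; simp
    have := hv v hv'
    rwa [he, Set.ncard_coe_finset] at this
  have hnr : ∀ a ∈ (Finset.univ : Finset A), head a ≠ r := by
    intro a _ h
    have : a ∈ {b : A | head b = r} := h
    rw [hr] at this
    exact this
  obtain ⟨f, hfU, hfP, hfA⟩ := main_induction tail head r k Finset.univ hnr hdeg hcut
  have hfU' : (⋃ i, f i) = Set.univ := by rw [hfU, Finset.coe_univ]
  refine ⟨⟨f, hfU', hfP, hfA⟩, ⟨f, hfU', hfP, ?_⟩⟩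
  intro i
  obtain ⟨huniq, hnr', hreach⟩ := hfA i
  constructor
  · -- weak connectivity
    have hstep : ∀ x y, (∃ a ∈ f i, tail a = x ∧ head a = y) →
        Step tail head (f i) x y := by
      rintro x y ⟨a, ha, h1, h2⟩
      exact ⟨a, ha, by rw [h1, h2]⟩
    have hsymm : Symmetric (Step tail head (f i)) := by
      rintro x y ⟨a, ha, h⟩
      exact ⟨a, ha, h.trans Sym2.eq_swap⟩
    intro x y
    have hx : Relation.ReflTransGen (Step tail head (f i)) r x := Relation.ReflTransGen.mono hstep _ _ (hreach x)
    have hy : Relation.ReflTransGen (Step tail head (f i)) r y := Relation.ReflTransGen.mono hstep _ _ (hreach y)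
    exact Relation.ReflTransGen.trans (haveI : Std.Symm (Step tail head (f i)) := ⟨fun _ _ h => hsymm h⟩; Std.Symm.symm _ _ hx) hy
  · intro v hv'
    obtain ⟨a, ⟨ha, hh⟩, -⟩ := huniq v hv'
    exact ⟨a, ha, hh⟩


end ArborescenceStmt
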